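/- If φ_n → φ in L²(0,2) and K_n → K in 𝔖₂ (as integral operators on L²(0,1) with kernels k_n, k supported on {x ≥ y}), and f_n(x,y) = φ_n(x+y) − φ_n(x−y), then the functions σ_n(x) := −2φ_n(2x) − 2∫₀ˣ k_n(x,s) f_n(s,x) ds converge in L²(0,1) to σ(x) := −2φ(2x) − 2∫₀ˣ k(x,s) f(s,x) ds; moreover ‖∫₀ˣ k(x,s)f(s,x)ds‖_{L²(0,1)} ≤ √2 ‖K‖_{𝔖₂} ‖φ‖_{L²(0,2)}. -/

import Mathlib

open Filter MeasureTheory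

section Stmt18Helpers
open Set intervalIntegral

/-- Cauchy–Schwarz for integrals. -/
lemma my_cs {μ : Measure ℝ} (u v : ℝ → ℝ)
    (hu : Integrable (fun s => u s ^ 2) μ) (hv : Integrable (fun s => v s ^ 2) μ)
    (huv : Integrable (fun s => u s * v s) μ) :
    (∫ s, u s * v s ∂μ) ^ 2 ≤ (∫ s, u s ^ 2 ∂μ) * (∫ s, v s ^ 2 ∂μ) := by
  set A := ∫ s, u s ^ 2 ∂μ with hA
  set B := ∫ s, u s * v s ∂μ with hB
  set C := ∫ s, v s ^ 2 ∂μ with hC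
  have key : ∀ t : ℝ, 0 ≤ A * (t * t) + (2 * B) * t + C := by
    intro t
    have i1 : Integrable (fun s => t ^ 2 * u s ^ 2) μ := hu.const_mul _
    have i2 : Integrable (fun s => 2 * t * (u s * v s)) μ := huv.const_mul _
    have h2 : 0 ≤ ∫ s, (t * u s + v s) ^ 2 ∂μ :=
      integral_nonneg fun s => sq_nonneg _
    have h3 : ∫ s, (t * u s + v s) ^ 2 ∂μ = A * (t * t) + (2 * B) * t + C := by
      have hrw : (fun s => (t * u s + v s) ^ 2)
          = fun s => (t ^ 2 * u s ^ 2 + 2 * t * (u s * v s)) + v s ^ 2 := by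
        funext s; ring
      have i12 : Integrable (fun s => t ^ 2 * u s ^ 2 + 2 * t * (u s * v s)) μ :=
        i1.add i2
      rw [hrw, integral_add i12 hv, integral_add i1 i2,
        MeasureTheory.integral_const_mul, MeasureTheory.integral_const_mul]
      ring
    linarith [h3 ▸ h2]
  have := discrim_le_zero key
  rw [discrim] at this
  nlinarith [this]

/-- product of two L² functions is integrable -/
lemma my_mul_int {μ : Measure ℝ} {u v : ℝ → ℝ}
    (hum : AEStronglyMeasurable u μ) (hvm : AEStronglyMeasurable v μ)
    (hu : Integrable (fun s => u s ^ 2) μ) (hv : Integrable (fun s => v s ^ 2) μ) :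
    Integrable (fun s => u s * v s) μ := by
  refine Integrable.mono' ((hu.add hv).div_const 2) (hum.mul hvm) ?_
  filter_upwards with s
  simp only [Pi.add_apply]
  rw [Real.norm_eq_abs, abs_le]
  constructor <;> nlinarith [sq_nonneg (u s + v s), sq_nonneg (u s - v s)]

/-- L² bound on f(s,x)=ψ(s+x)-ψ(s-x) -/
lemma my_f_bound {ψ : ℝ → ℝ} (hm : Measurable ψ) (he : ∀ s, ψ (-s) = ψ s)
    (hi : IntegrableOn (fun s => ψ s ^ 2) (Set.Ioc (0:ℝ) 2)) {x : ℝ}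
    (hx0 : 0 < x) (hx1 : x ≤ 1) :
    IntegrableOn (fun s => (ψ (s + x) - ψ (s - x)) ^ 2) (Set.Ioc 0 x) ∧
    ∫ s in Set.Ioc 0 x, (ψ (s + x) - ψ (s - x)) ^ 2
      ≤ 2 * ∫ s in Set.Ioc (0:ℝ) 2, ψ s ^ 2 := by
  have hsub : ∀ a b : ℝ, 0 ≤ a → a ≤ b → b ≤ 2 → IntervalIntegrable (fun s => ψ s ^ 2) volume a b := by
    intro a b ha hab hb
    exact (intervalIntegrable_iff_integrableOn_Ioc_of_le hab).mpr
      (hi.mono_set (Set.Ioc_subset_Ioc ha hb))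
  have ha : IntervalIntegrable (fun s => ψ (s + x) ^ 2) volume 0 x := by
    have := (hsub x (2 * x) hx0.le (by linarith) (by linarith)).comp_add_right x
    simpa [two_mul] using this
  have hb : IntervalIntegrable (fun s => ψ (x - s) ^ 2) volume 0 x := by
    have := ((hsub 0 x (le_refl 0) hx0.le (by linarith)).comp_sub_left x).symm
    simpa using this
  have hrw : ∀ s : ℝ, ψ (s - x) = ψ (x - s) := by
    intro s; rw [← he (x - s)]; ring_nf
  have hmeas : Measurable fun s => (ψ (s + x) - ψ (s - x)) ^ 2 :=
    (((hm.comp (measurable_id.add_const x)).sub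
      (hm.comp (measurable_id.sub_const x))).pow_const 2)
  have hbound : ∀ s : ℝ, (ψ (s + x) - ψ (s - x)) ^ 2
      ≤ 2 * ψ (s + x) ^ 2 + 2 * ψ (x - s) ^ 2 := by
    intro s; rw [hrw s]; nlinarith [sq_nonneg (ψ (s + x) + ψ (x - s))]
  have hdom : IntegrableOn (fun s => 2 * ψ (s + x) ^ 2 + 2 * ψ (x - s) ^ 2) (Set.Ioc 0 x) := by
    have := ((ha.const_mul 2).add (hb.const_mul 2))
    exact (intervalIntegrable_iff_integrableOn_Ioc_of_le hx0.le).mp this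
  have hint : IntegrableOn (fun s => (ψ (s + x) - ψ (s - x)) ^ 2) (Set.Ioc 0 x) := by
    refine Integrable.mono' hdom hmeas.aestronglyMeasurable ?_
    filter_upwards with s
    rw [Real.norm_eq_abs, abs_of_nonneg (sq_nonneg _)]
    exact hbound s
  refine ⟨hint, ?_⟩
  have step1 : ∫ s in Set.Ioc 0 x, (ψ (s + x) - ψ (s - x)) ^ 2
      ≤ ∫ s in Set.Ioc 0 x, (2 * ψ (s + x) ^ 2 + 2 * ψ (x - s) ^ 2) :=
    setIntegral_mono_on hint hdom measurableSet_Ioc (fun s _ => hbound s)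
  have step2 : ∫ s in Set.Ioc 0 x, (2 * ψ (s + x) ^ 2 + 2 * ψ (x - s) ^ 2)
      = 2 * (∫ s in (0:ℝ)..(2*x), ψ s ^ 2) := by
    rw [← intervalIntegral.integral_of_le hx0.le]
    rw [intervalIntegral.integral_add (ha.const_mul 2) (hb.const_mul 2),
      intervalIntegral.integral_const_mul, intervalIntegral.integral_const_mul,
      intervalIntegral.integral_comp_add_right (fun s => ψ s ^ 2) x,
      intervalIntegral.integral_comp_sub_left (fun s => ψ s ^ 2) x]
    have : (0:ℝ) + x = x := by ring
    rw [this]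
    have h2 : x - x = (0:ℝ) := by ring
    have h3 : x - 0 = x := by ring
    rw [h2, h3]
    rw [← intervalIntegral.integral_add_adjacent_intervals (hsub 0 x le_rfl hx0.le (by linarith))
      (hsub x (2*x) hx0.le (by linarith) (by linarith))]
    ring
  have step3 : ∫ s in (0:ℝ)..(2*x), ψ s ^ 2 ≤ ∫ s in (0:ℝ)..2, ψ s ^ 2 := by
    refine intervalIntegral.integral_mono_interval le_rfl (by linarith) (by linarith) ?_
      (hsub 0 2 le_rfl (by norm_num) le_rfl)
    filter_upwards with s using sq_nonneg _
  have step4 : ∫ s in (0:ℝ)..2, ψ s ^ 2 = ∫ s in Set.Ioc (0:ℝ) 2, ψ s ^ 2 :=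
    intervalIntegral.integral_of_le (by norm_num)
  calc ∫ s in Set.Ioc 0 x, (ψ (s + x) - ψ (s - x)) ^ 2
      ≤ 2 * (∫ s in (0:ℝ)..(2*x), ψ s ^ 2) := by rw [← step2]; exact step1
    _ ≤ 2 * ∫ s in Set.Ioc (0:ℝ) 2, ψ s ^ 2 := by rw [← step4]; linarith

noncomputable def Gfun (κ : ℝ → ℝ → ℝ) (ψ : ℝ → ℝ) (x : ℝ) : ℝ :=
  ∫ s in Set.Ioc (0:ℝ) 1, κ x s * (ψ (s + x) - ψ (s - x))

lemma Gfun_meas {κ : ℝ → ℝ → ℝ} {ψ : ℝ → ℝ}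
    (hκm : Measurable (Function.uncurry κ)) (hψm : Measurable ψ) :
    StronglyMeasurable (Gfun κ ψ) := by
  apply MeasureTheory.StronglyMeasurable.integral_prod_right'
    (f := fun p : ℝ × ℝ => κ p.1 p.2 * (ψ (p.2 + p.1) - ψ (p.2 - p.1)))
  exact (hκm.mul ((hψm.comp (measurable_snd.add measurable_fst)).sub
    (hψm.comp (measurable_snd.sub measurable_fst)))).stronglyMeasurable

lemma g_eq_G {κ : ℝ → ℝ → ℝ} {ψ : ℝ → ℝ}
    (hκs : ∀ x y, x < y → κ x y = 0) {x : ℝ} (hx0 : 0 ≤ x) (hx1 : x ≤ 1) :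
    ∫ s in (0:ℝ)..x, κ x s * (ψ (s + x) - ψ (s - x)) = Gfun κ ψ x := by
  rw [intervalIntegral.integral_of_le hx0, Gfun]
  have h1 : ∫ s in Set.Ioc (0:ℝ) 1, κ x s * (ψ (s + x) - ψ (s - x))
      = ∫ s in Set.Ioc (0:ℝ) 1,
          (Set.Ioc (0:ℝ) x).indicator (fun s => κ x s * (ψ (s + x) - ψ (s - x))) s := by
    refine setIntegral_congr_fun measurableSet_Ioc ?_
    intro s hs
    by_cases h : s ≤ x
    · rw [Set.indicator_of_mem (Set.mem_Ioc.mpr ⟨hs.1, h⟩)]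
    · rw [Set.indicator_of_notMem (fun hmem : s ∈ Set.Ioc 0 x => h hmem.2)]
      simp [hκs x s (lt_of_not_ge h)]
  rw [h1, MeasureTheory.setIntegral_indicator measurableSet_Ioc]
  congr 1
  rw [Set.Ioc_inter_Ioc]
  congr 1 <;> simp [hx1]

lemma my_core {ψ : ℝ → ℝ} {κ : ℝ → ℝ → ℝ}
    (hψm : Measurable ψ) (hψe : ∀ s, ψ (-s) = ψ s)
    (hψi : IntegrableOn (fun s => ψ s ^ 2) (Set.Ioc (0:ℝ) 2))
    (hκm : Measurable (Function.uncurry κ))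
    (hκs : ∀ x y, x < y → κ x y = 0)
    (hκi : IntegrableOn (fun p : ℝ × ℝ => κ p.1 p.2 ^ 2)
      (Set.Ioc (0:ℝ) 1 ×ˢ Set.Ioc (0:ℝ) 1)) :
    IntegrableOn (fun x => (∫ s in (0:ℝ)..x, κ x s * (ψ (s+x) - ψ (s-x))) ^ 2)
        (Set.Ioc (0:ℝ) 1)
    ∧ ∫ x in Set.Ioc (0:ℝ) 1, (∫ s in (0:ℝ)..x, κ x s * (ψ (s+x) - ψ (s-x))) ^ 2
        ≤ 2 * (∫ p in Set.Ioc (0:ℝ) 1 ×ˢ Set.Ioc (0:ℝ) 1, κ p.1 p.2 ^ 2)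
          * (∫ s in Set.Ioc (0:ℝ) 2, ψ s ^ 2) := by
  have hprod : Integrable (fun p : ℝ × ℝ => κ p.1 p.2 ^ 2)
      ((volume.restrict (Set.Ioc (0:ℝ) 1)).prod (volume.restrict (Set.Ioc (0:ℝ) 1))) := by
    rw [Measure.prod_restrict, ← Measure.volume_eq_prod]; exact hκi
  have hsec : ∀ᵐ x ∂(volume.restrict (Set.Ioc (0:ℝ) 1)),
      Integrable (fun s => κ x s ^ 2) (volume.restrict (Set.Ioc (0:ℝ) 1)) :=
    hprod.prod_right_ae
  have hCint : Integrable (fun x => ∫ s in Set.Ioc (0:ℝ) 1, κ x s ^ 2)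
      (volume.restrict (Set.Ioc (0:ℝ) 1)) := hprod.integral_prod_left
  have hCval : ∫ x in Set.Ioc (0:ℝ) 1, (∫ s in Set.Ioc (0:ℝ) 1, κ x s ^ 2)
      = ∫ p in Set.Ioc (0:ℝ) 1 ×ˢ Set.Ioc (0:ℝ) 1, κ p.1 p.2 ^ 2 := by
    rw [show (volume : Measure (ℝ × ℝ)).restrict (Set.Ioc (0:ℝ) 1 ×ˢ Set.Ioc (0:ℝ) 1)
        = (volume.restrict (Set.Ioc (0:ℝ) 1)).prod (volume.restrict (Set.Ioc (0:ℝ) 1)) from by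
      rw [Measure.prod_restrict, ← Measure.volume_eq_prod]]
    exact (MeasureTheory.integral_prod _ hprod).symm
  have haesm : AEStronglyMeasurable
      (fun x => (∫ s in (0:ℝ)..x, κ x s * (ψ (s+x) - ψ (s-x))) ^ 2)
      (volume.restrict (Set.Ioc (0:ℝ) 1)) := by
    have hsm : StronglyMeasurable fun x => (Gfun κ ψ x) ^ 2 := by
      simpa [pow_two, Pi.mul_def] using ((Gfun_meas hκm hψm).mul (Gfun_meas hκm hψm))
    refine hsm.aestronglyMeasurable.congr ?_
    filter_upwards [ae_restrict_mem measurableSet_Ioc] with x hx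
    rw [g_eq_G hκs hx.1.le hx.2]
  have hbd : ∀ᵐ x ∂(volume.restrict (Set.Ioc (0:ℝ) 1)),
      (∫ s in (0:ℝ)..x, κ x s * (ψ (s+x) - ψ (s-x))) ^ 2
        ≤ (∫ s in Set.Ioc (0:ℝ) 1, κ x s ^ 2) * (2 * ∫ s in Set.Ioc (0:ℝ) 2, ψ s ^ 2) := by
    filter_upwards [hsec, ae_restrict_mem measurableSet_Ioc] with x hxsec hxI
    obtain ⟨hf2, hfle⟩ := my_f_bound hψm hψe hψi hxI.1 hxI.2
    have hκx2 : IntegrableOn (fun s => κ x s ^ 2) (Set.Ioc 0 x) :=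
      MeasureTheory.IntegrableOn.mono_set hxsec (Set.Ioc_subset_Ioc_right hxI.2)
    have hκxm : Measurable fun s => κ x s := hκm.comp measurable_prodMk_left
    have hfm : Measurable fun s => ψ (s + x) - ψ (s - x) :=
      (hψm.comp (measurable_id.add_const x)).sub (hψm.comp (measurable_id.sub_const x))
    have hmul : IntegrableOn (fun s => κ x s * (ψ (s + x) - ψ (s - x))) (Set.Ioc 0 x) :=
      my_mul_int hκxm.aestronglyMeasurable hfm.aestronglyMeasurable hκx2 hf2
    have hcs := my_cs (μ := volume.restrict (Set.Ioc 0 x)) _ _ hκx2 hf2 hmul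
    rw [intervalIntegral.integral_of_le hxI.1.le]
    refine le_trans hcs (mul_le_mul ?_ hfle
      (setIntegral_nonneg measurableSet_Ioc fun s _ => sq_nonneg _)
      (setIntegral_nonneg measurableSet_Ioc fun s _ => sq_nonneg _))
    exact setIntegral_mono_set hxsec
      (by filter_upwards with s using sq_nonneg _)
      (HasSubset.Subset.eventuallyLE (Set.Ioc_subset_Ioc_right hxI.2))
  have hC2 : Integrable
      (fun x => (∫ s in Set.Ioc (0:ℝ) 1, κ x s ^ 2) * (2 * ∫ s in Set.Ioc (0:ℝ) 2, ψ s ^ 2))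
      (volume.restrict (Set.Ioc (0:ℝ) 1)) := hCint.mul_const _
  have hgint : Integrable
      (fun x => (∫ s in (0:ℝ)..x, κ x s * (ψ (s+x) - ψ (s-x))) ^ 2)
      (volume.restrict (Set.Ioc (0:ℝ) 1)) := by
    refine Integrable.mono' hC2 haesm ?_
    filter_upwards [hbd] with x hx
    rw [Real.norm_eq_abs, abs_of_nonneg (sq_nonneg _)]
    exact hx
  refine ⟨hgint, ?_⟩
  calc ∫ x in Set.Ioc (0:ℝ) 1, (∫ s in (0:ℝ)..x, κ x s * (ψ (s+x) - ψ (s-x))) ^ 2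
      ≤ ∫ x in Set.Ioc (0:ℝ) 1,
          (∫ s in Set.Ioc (0:ℝ) 1, κ x s ^ 2) * (2 * ∫ s in Set.Ioc (0:ℝ) 2, ψ s ^ 2) :=
        MeasureTheory.integral_mono_ae hgint hC2 hbd
    _ = 2 * (∫ p in Set.Ioc (0:ℝ) 1 ×ˢ Set.Ioc (0:ℝ) 1, κ p.1 p.2 ^ 2)
          * (∫ s in Set.Ioc (0:ℝ) 2, ψ s ^ 2) := by
        rw [MeasureTheory.integral_mul_const, hCval]; ring

end Stmt18Helpers

open Set intervalIntegral in
/-- If `φ_n → φ₀` in `L²(0,2)` (functions extended evenly) and the lower-triangular kernels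
`k_n → k₀` in `L²((0,1)²)`, then
`σ_n(x) = −2φ_n(2x) − 2∫₀ˣ k_n(x,s) f_n(s,x) ds`, with `f_n(s,x) = φ_n(s+x) − φ_n(s−x)`,
converge in `L²(0,1)` to `σ(x) = −2φ₀(2x) − 2∫₀ˣ k₀(x,s) f₀(s,x) ds`; moreover
`‖∫₀ˣ k₀(x,s) f₀(s,x) ds‖_{L²(0,1)} ≤ √2 ‖K₀‖_{𝔖₂} ‖φ₀‖_{L²(0,2)}`. -/
theorem stmt18 (φ : ℕ → ℝ → ℝ) (φ₀ : ℝ → ℝ) (k : ℕ → ℝ → ℝ → ℝ) (k₀ : ℝ → ℝ → ℝ)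
    (hφmeas : ∀ n, Measurable (φ n)) (hφ₀meas : Measurable φ₀)
    (hevenn : ∀ n s, φ n (-s) = φ n s) (heven : ∀ s, φ₀ (-s) = φ₀ s)
    (hkmeas : ∀ n, Measurable (Function.uncurry (k n)))
    (hk₀meas : Measurable (Function.uncurry k₀))
    (hksupp : ∀ n x y, x < y → k n x y = 0) (hk₀supp : ∀ x y, x < y → k₀ x y = 0)
    (hφnint : ∀ n, IntegrableOn (fun s => φ n s ^ 2) (Set.Ioc (0:ℝ) 2))
    (hφint : IntegrableOn (fun s => φ₀ s ^ 2) (Set.Ioc (0:ℝ) 2))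
    (hknL2 : ∀ n, IntegrableOn (fun p : ℝ × ℝ => k n p.1 p.2 ^ 2)
      (Set.Ioc (0:ℝ) 1 ×ˢ Set.Ioc (0:ℝ) 1))
    (hkL2 : IntegrableOn (fun p : ℝ × ℝ => k₀ p.1 p.2 ^ 2)
      (Set.Ioc (0:ℝ) 1 ×ˢ Set.Ioc (0:ℝ) 1))
    (hφconv : Tendsto (fun n => ∫ s in (0:ℝ)..2, (φ n s - φ₀ s) ^ 2) atTop (nhds 0))
    (hkconv : Tendsto (fun n => ∫ p in Set.Ioc (0:ℝ) 1 ×ˢ Set.Ioc (0:ℝ) 1,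
        (k n p.1 p.2 - k₀ p.1 p.2) ^ 2) atTop (nhds 0)) :
    Tendsto (fun n => ∫ x in (0:ℝ)..1,
        (((-2) * φ n (2 * x) - 2 * ∫ s in (0:ℝ)..x, k n x s * (φ n (s + x) - φ n (s - x)))
          - ((-2) * φ₀ (2 * x)
              - 2 * ∫ s in (0:ℝ)..x, k₀ x s * (φ₀ (s + x) - φ₀ (s - x)))) ^ 2)
      atTop (nhds 0)
    ∧ Real.sqrt (∫ x in (0:ℝ)..1,
          (∫ s in (0:ℝ)..x, k₀ x s * (φ₀ (s + x) - φ₀ (s - x))) ^ 2)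
      ≤ Real.sqrt 2
        * Real.sqrt (∫ p in Set.Ioc (0:ℝ) 1 ×ˢ Set.Ioc (0:ℝ) 1, k₀ p.1 p.2 ^ 2)
        * Real.sqrt (∫ s in (0:ℝ)..2, φ₀ s ^ 2) := by
  -- abbreviations
  have hCK : (0:ℝ) ≤ ∫ p in Set.Ioc (0:ℝ) 1 ×ˢ Set.Ioc (0:ℝ) 1, k₀ p.1 p.2 ^ 2 :=
    setIntegral_nonneg (measurableSet_Ioc.prod measurableSet_Ioc) fun p _ => sq_nonneg _
  have hC₀ : (0:ℝ) ≤ ∫ s in Set.Ioc (0:ℝ) 2, φ₀ s ^ 2 :=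
    setIntegral_nonneg measurableSet_Ioc fun s _ => sq_nonneg _
  obtain ⟨h0int, h0le⟩ := my_core hφ₀meas heven hφint hk₀meas hk₀supp hkL2
  constructor
  · -- convergence part
    -- difference functions
    have hψm : ∀ n, Measurable fun s => φ n s - φ₀ s := fun n => (hφmeas n).sub hφ₀meas
    have hψe : ∀ n, ∀ s : ℝ, φ n (-s) - φ₀ (-s) = φ n s - φ₀ s := fun n s => by
      rw [hevenn n s, heven s]
    have hψi : ∀ n, IntegrableOn (fun s => (φ n s - φ₀ s) ^ 2) (Set.Ioc (0:ℝ) 2) := by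
      intro n
      have hb : IntegrableOn (fun s => 2 * φ n s ^ 2 + 2 * φ₀ s ^ 2) (Set.Ioc (0:ℝ) 2) :=
        ((hφnint n).const_mul 2).add (hφint.const_mul 2)
      refine Integrable.mono' hb ((hψm n).pow_const 2).aestronglyMeasurable ?_
      filter_upwards with s
      rw [Real.norm_eq_abs, abs_of_nonneg (sq_nonneg _)]
      nlinarith [sq_nonneg (φ n s + φ₀ s)]
    have hκm : ∀ n, Measurable (Function.uncurry fun x y => k n x y - k₀ x y) := fun n =>
      (hkmeas n).sub hk₀meas
    have hκs : ∀ n, ∀ x y : ℝ, x < y → k n x y - k₀ x y = 0 := fun n x y h => by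
      rw [hksupp n x y h, hk₀supp x y h, sub_zero]
    have hκi : ∀ n, IntegrableOn (fun p : ℝ × ℝ => (k n p.1 p.2 - k₀ p.1 p.2) ^ 2)
        (Set.Ioc (0:ℝ) 1 ×ˢ Set.Ioc (0:ℝ) 1) := by
      intro n
      have hb : IntegrableOn (fun p : ℝ × ℝ => 2 * k n p.1 p.2 ^ 2 + 2 * k₀ p.1 p.2 ^ 2)
          (Set.Ioc (0:ℝ) 1 ×ˢ Set.Ioc (0:ℝ) 1) :=
        ((hknL2 n).const_mul 2).add (hkL2.const_mul 2)
      have hmm : Measurable fun p : ℝ × ℝ => (k n p.1 p.2 - k₀ p.1 p.2) ^ 2 :=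
        ((hkmeas n).sub hk₀meas).pow_const 2
      refine Integrable.mono' hb hmm.aestronglyMeasurable ?_
      filter_upwards with p
      rw [Real.norm_eq_abs, abs_of_nonneg (sq_nonneg _)]
      nlinarith [sq_nonneg (k n p.1 p.2 + k₀ p.1 p.2)]
    -- core applications
    have hU := fun n => my_core (ψ := φ n) (κ := fun x y => k n x y - k₀ x y)
      (hφmeas n) (hevenn n) (hφnint n) (hκm n) (hκs n) (hκi n)
    have hV := fun n => my_core (ψ := fun s => φ n s - φ₀ s) (κ := k₀)
      (hψm n) (hψe n) (hψi n) hk₀meas hk₀supp hkL2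
    -- the translated square term
    have hT1 : ∀ n, IntegrableOn (fun x => (φ n (2 * x) - φ₀ (2 * x)) ^ 2)
        (Set.Ioc (0:ℝ) 1) := by
      intro n
      have h2 : IntervalIntegrable (fun s => (φ n s - φ₀ s) ^ 2) volume 0 2 :=
        (intervalIntegrable_iff_integrableOn_Ioc_of_le (by norm_num)).mpr (hψi n)
      have h3 := h2.comp_mul_left (c := 2)
      rw [← intervalIntegrable_iff_integrableOn_Ioc_of_le zero_le_one]
      norm_num at h3
      exact h3
    have hT1v : ∀ n, ∫ x in Set.Ioc (0:ℝ) 1, (φ n (2 * x) - φ₀ (2 * x)) ^ 2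
        = 2⁻¹ * ∫ s in (0:ℝ)..2, (φ n s - φ₀ s) ^ 2 := by
      intro n
      rw [← intervalIntegral.integral_of_le zero_le_one]
      have h3 := intervalIntegral.integral_comp_mul_left (a := (0:ℝ)) (b := 1) (c := 2)
        (fun s => (φ n s - φ₀ s) ^ 2) two_ne_zero
      norm_num at h3
      rw [h3]
      norm_num
    have hE : ∀ n, ∫ s in (0:ℝ)..2, (φ n s - φ₀ s) ^ 2
        = ∫ s in Set.Ioc (0:ℝ) 2, (φ n s - φ₀ s) ^ 2 := fun n =>
      intervalIntegral.integral_of_le (by norm_num)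
    have hKn0 : ∀ n, (0:ℝ) ≤ ∫ p in Set.Ioc (0:ℝ) 1 ×ˢ Set.Ioc (0:ℝ) 1,
        (k n p.1 p.2 - k₀ p.1 p.2) ^ 2 := fun n =>
      setIntegral_nonneg (measurableSet_Ioc.prod measurableSet_Ioc) fun p _ => sq_nonneg _
    have hEn0 : ∀ n, (0:ℝ) ≤ ∫ s in (0:ℝ)..2, (φ n s - φ₀ s) ^ 2 := fun n => by
      rw [hE n]; exact setIntegral_nonneg measurableSet_Ioc fun s _ => sq_nonneg _
    have hIφn : ∀ n, ∫ s in Set.Ioc (0:ℝ) 2, φ n s ^ 2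
        ≤ 2 * (∫ s in Set.Ioc (0:ℝ) 2, (φ n s - φ₀ s) ^ 2)
          + 2 * ∫ s in Set.Ioc (0:ℝ) 2, φ₀ s ^ 2 := by
      intro n
      have hb : IntegrableOn (fun s => 2 * (φ n s - φ₀ s) ^ 2 + 2 * φ₀ s ^ 2)
          (Set.Ioc (0:ℝ) 2) := ((hψi n).const_mul 2).add (hφint.const_mul 2)
      have h1 : ∫ s in Set.Ioc (0:ℝ) 2, φ n s ^ 2
          ≤ ∫ s in Set.Ioc (0:ℝ) 2, (2 * (φ n s - φ₀ s) ^ 2 + 2 * φ₀ s ^ 2) :=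
        setIntegral_mono_on (hφnint n) hb measurableSet_Ioc
          (fun s _ => by nlinarith [sq_nonneg (φ n s - 2 * φ₀ s)])
      rw [MeasureTheory.integral_add ((hψi n).const_mul 2) (hφint.const_mul 2),
        MeasureTheory.integral_const_mul, MeasureTheory.integral_const_mul] at h1
      exact h1
    -- a.e. section integrability
    have hsecn : ∀ n, ∀ᵐ x ∂(volume.restrict (Set.Ioc (0:ℝ) 1)),
        Integrable (fun s => k n x s ^ 2) (volume.restrict (Set.Ioc (0:ℝ) 1)) := by
      intro n
      have : Integrable (fun p : ℝ × ℝ => k n p.1 p.2 ^ 2)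
          ((volume.restrict (Set.Ioc (0:ℝ) 1)).prod (volume.restrict (Set.Ioc (0:ℝ) 1))) := by
        rw [Measure.prod_restrict, ← Measure.volume_eq_prod]; exact hknL2 n
      exact this.prod_right_ae
    have hsec0 : ∀ᵐ x ∂(volume.restrict (Set.Ioc (0:ℝ) 1)),
        Integrable (fun s => k₀ x s ^ 2) (volume.restrict (Set.Ioc (0:ℝ) 1)) := by
      have : Integrable (fun p : ℝ × ℝ => k₀ p.1 p.2 ^ 2)
          ((volume.restrict (Set.Ioc (0:ℝ) 1)).prod (volume.restrict (Set.Ioc (0:ℝ) 1))) := by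
        rw [Measure.prod_restrict, ← Measure.volume_eq_prod]; exact hkL2
      exact this.prod_right_ae
    have hsecκ : ∀ n, ∀ᵐ x ∂(volume.restrict (Set.Ioc (0:ℝ) 1)),
        Integrable (fun s => (k n x s - k₀ x s) ^ 2) (volume.restrict (Set.Ioc (0:ℝ) 1)) := by
      intro n
      have : Integrable (fun p : ℝ × ℝ => (k n p.1 p.2 - k₀ p.1 p.2) ^ 2)
          ((volume.restrict (Set.Ioc (0:ℝ) 1)).prod (volume.restrict (Set.Ioc (0:ℝ) 1))) := by
        rw [Measure.prod_restrict, ← Measure.volume_eq_prod]; exact hκi n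
      exact this.prod_right_ae
    -- the pointwise a.e. bound
    have hbd : ∀ n, ∀ᵐ x ∂(volume.restrict (Set.Ioc (0:ℝ) 1)),
        (((-2) * φ n (2 * x) - 2 * ∫ s in (0:ℝ)..x, k n x s * (φ n (s + x) - φ n (s - x)))
          - ((-2) * φ₀ (2 * x)
            - 2 * ∫ s in (0:ℝ)..x, k₀ x s * (φ₀ (s + x) - φ₀ (s - x)))) ^ 2
        ≤ 12 * (φ n (2 * x) - φ₀ (2 * x)) ^ 2
          + 12 * (∫ s in (0:ℝ)..x, (k n x s - k₀ x s) * (φ n (s + x) - φ n (s - x))) ^ 2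
          + 12 * (∫ s in (0:ℝ)..x, k₀ x s
              * ((φ n (s + x) - φ₀ (s + x)) - (φ n (s - x) - φ₀ (s - x)))) ^ 2 := by
      intro n
      filter_upwards [hsecn n, hsec0, hsecκ n, ae_restrict_mem measurableSet_Ioc]
        with x hx1 hx2 hx3 hxI
      have hfn2 := (my_f_bound (hφmeas n) (hevenn n) (hφnint n) hxI.1 hxI.2).1
      have hf02 := (my_f_bound hφ₀meas heven hφint hxI.1 hxI.2).1
      have hfψ2 : IntegrableOn
          (fun s => ((φ n (s + x) - φ₀ (s + x)) - (φ n (s - x) - φ₀ (s - x))) ^ 2)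
          (Set.Ioc 0 x) :=
        (my_f_bound (ψ := fun s => φ n s - φ₀ s) (hψm n) (hψe n) (hψi n) hxI.1 hxI.2).1
      have hknx : IntegrableOn (fun s => k n x s ^ 2) (Set.Ioc 0 x) :=
        MeasureTheory.IntegrableOn.mono_set hx1 (Set.Ioc_subset_Ioc_right hxI.2)
      have hk0x : IntegrableOn (fun s => k₀ x s ^ 2) (Set.Ioc 0 x) :=
        MeasureTheory.IntegrableOn.mono_set hx2 (Set.Ioc_subset_Ioc_right hxI.2)
      have hκx : IntegrableOn (fun s => (k n x s - k₀ x s) ^ 2) (Set.Ioc 0 x) :=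
        MeasureTheory.IntegrableOn.mono_set hx3 (Set.Ioc_subset_Ioc_right hxI.2)
      have mkn : Measurable fun s => k n x s := (hkmeas n).comp measurable_prodMk_left
      have mk0 : Measurable fun s => k₀ x s := hk₀meas.comp measurable_prodMk_left
      have mκ : Measurable fun s => k n x s - k₀ x s := mkn.sub mk0
      have mfn : Measurable fun s => φ n (s + x) - φ n (s - x) :=
        ((hφmeas n).comp (measurable_id.add_const x)).sub
          ((hφmeas n).comp (measurable_id.sub_const x))
      have mf0 : Measurable fun s => φ₀ (s + x) - φ₀ (s - x) :=
        (hφ₀meas.comp (measurable_id.add_const x)).sub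
          (hφ₀meas.comp (measurable_id.sub_const x))
      have mfψ : Measurable fun s => (φ n (s + x) - φ₀ (s + x)) - (φ n (s - x) - φ₀ (s - x)) :=
        (((hφmeas n).sub hφ₀meas).comp (measurable_id.add_const x)).sub
          (((hφmeas n).sub hφ₀meas).comp (measurable_id.sub_const x))
      have iknfn : IntervalIntegrable (fun s => k n x s * (φ n (s + x) - φ n (s - x)))
          volume 0 x :=
        (intervalIntegrable_iff_integrableOn_Ioc_of_le hxI.1.le).mpr
          (my_mul_int mkn.aestronglyMeasurable mfn.aestronglyMeasurable hknx hfn2)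
      have iκfn : IntervalIntegrable
          (fun s => (k n x s - k₀ x s) * (φ n (s + x) - φ n (s - x))) volume 0 x :=
        (intervalIntegrable_iff_integrableOn_Ioc_of_le hxI.1.le).mpr
          (my_mul_int mκ.aestronglyMeasurable mfn.aestronglyMeasurable hκx hfn2)
      have ik0fn : IntervalIntegrable (fun s => k₀ x s * (φ n (s + x) - φ n (s - x)))
          volume 0 x :=
        (intervalIntegrable_iff_integrableOn_Ioc_of_le hxI.1.le).mpr
          (my_mul_int mk0.aestronglyMeasurable mfn.aestronglyMeasurable hk0x hfn2)
      have ik0f0 : IntervalIntegrable (fun s => k₀ x s * (φ₀ (s + x) - φ₀ (s - x)))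
          volume 0 x :=
        (intervalIntegrable_iff_integrableOn_Ioc_of_le hxI.1.le).mpr
          (my_mul_int mk0.aestronglyMeasurable mf0.aestronglyMeasurable hk0x hf02)
      have ik0fψ : IntervalIntegrable (fun s => k₀ x s
          * ((φ n (s + x) - φ₀ (s + x)) - (φ n (s - x) - φ₀ (s - x)))) volume 0 x :=
        (intervalIntegrable_iff_integrableOn_Ioc_of_le hxI.1.le).mpr
          (my_mul_int mk0.aestronglyMeasurable mfψ.aestronglyMeasurable hk0x hfψ2)
      have eq1 : ∫ s in (0:ℝ)..x, k n x s * (φ n (s + x) - φ n (s - x))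
          = (∫ s in (0:ℝ)..x, (k n x s - k₀ x s) * (φ n (s + x) - φ n (s - x)))
            + ∫ s in (0:ℝ)..x, k₀ x s * (φ n (s + x) - φ n (s - x)) := by
        rw [← intervalIntegral.integral_add iκfn ik0fn]
        apply intervalIntegral.integral_congr
        intro s _
        ring
      have eq2 : ∫ s in (0:ℝ)..x, k₀ x s * (φ n (s + x) - φ n (s - x))
          = (∫ s in (0:ℝ)..x, k₀ x s
              * ((φ n (s + x) - φ₀ (s + x)) - (φ n (s - x) - φ₀ (s - x))))
            + ∫ s in (0:ℝ)..x, k₀ x s * (φ₀ (s + x) - φ₀ (s - x)) := by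
        rw [← intervalIntegral.integral_add ik0fψ ik0f0]
        apply intervalIntegral.integral_congr
        intro s _
        ring
      rw [eq1, eq2]
      nlinarith [sq_nonneg ((φ n (2 * x) - φ₀ (2 * x))
          - (∫ s in (0:ℝ)..x, (k n x s - k₀ x s) * (φ n (s + x) - φ n (s - x)))),
        sq_nonneg ((φ n (2 * x) - φ₀ (2 * x))
          - (∫ s in (0:ℝ)..x, k₀ x s
              * ((φ n (s + x) - φ₀ (s + x)) - (φ n (s - x) - φ₀ (s - x))))),
        sq_nonneg ((∫ s in (0:ℝ)..x, (k n x s - k₀ x s) * (φ n (s + x) - φ n (s - x)))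
          - (∫ s in (0:ℝ)..x, k₀ x s
              * ((φ n (s + x) - φ₀ (s + x)) - (φ n (s - x) - φ₀ (s - x)))))]
    -- integrable upper bound
    have hbint : ∀ n, Integrable (fun x =>
        12 * (φ n (2 * x) - φ₀ (2 * x)) ^ 2
          + 12 * (∫ s in (0:ℝ)..x, (k n x s - k₀ x s) * (φ n (s + x) - φ n (s - x))) ^ 2
          + 12 * (∫ s in (0:ℝ)..x, k₀ x s
              * ((φ n (s + x) - φ₀ (s + x)) - (φ n (s - x) - φ₀ (s - x)))) ^ 2)
        (volume.restrict (Set.Ioc (0:ℝ) 1)) := fun n =>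
      (((hT1 n).const_mul 12).add ((hU n).1.const_mul 12)).add ((hV n).1.const_mul 12)
    -- measurability of the difference
    have haesmD : ∀ n, AEStronglyMeasurable (fun x =>
        (((-2) * φ n (2 * x) - 2 * ∫ s in (0:ℝ)..x, k n x s * (φ n (s + x) - φ n (s - x)))
          - ((-2) * φ₀ (2 * x)
            - 2 * ∫ s in (0:ℝ)..x, k₀ x s * (φ₀ (s + x) - φ₀ (s - x)))) ^ 2)
        (volume.restrict (Set.Ioc (0:ℝ) 1)) := by
      intro n
      have m1 : Measurable fun x : ℝ => φ n (2 * x) :=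
        (hφmeas n).comp (measurable_id.const_mul 2)
      have m2 : Measurable fun x : ℝ => φ₀ (2 * x) :=
        hφ₀meas.comp (measurable_id.const_mul 2)
      have hsm : StronglyMeasurable fun x =>
          (((-2) * φ n (2 * x) - 2 * Gfun (k n) (φ n) x)
            - ((-2) * φ₀ (2 * x) - 2 * Gfun k₀ φ₀ x)) ^ 2 := by
        apply Measurable.stronglyMeasurable
        exact ((((m1.const_mul (-2)).sub ((Gfun_meas (hkmeas n) (hφmeas n)).measurable.const_mul 2)).sub
          ((m2.const_mul (-2)).sub ((Gfun_meas hk₀meas hφ₀meas).measurable.const_mul 2))).pow_const 2)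
      refine hsm.aestronglyMeasurable.congr ?_
      filter_upwards [ae_restrict_mem measurableSet_Ioc] with x hx
      rw [← g_eq_G (hksupp n) hx.1.le hx.2, ← g_eq_G hk₀supp hx.1.le hx.2]
    -- integrability of the difference squared and the integral bound
    have hSle : ∀ n, ∫ x in Set.Ioc (0:ℝ) 1,
        (((-2) * φ n (2 * x) - 2 * ∫ s in (0:ℝ)..x, k n x s * (φ n (s + x) - φ n (s - x)))
          - ((-2) * φ₀ (2 * x)
            - 2 * ∫ s in (0:ℝ)..x, k₀ x s * (φ₀ (s + x) - φ₀ (s - x)))) ^ 2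
        ≤ 6 * (∫ s in (0:ℝ)..2, (φ n s - φ₀ s) ^ 2)
          + 48 * ((∫ p in Set.Ioc (0:ℝ) 1 ×ˢ Set.Ioc (0:ℝ) 1, (k n p.1 p.2 - k₀ p.1 p.2) ^ 2)
              * ((∫ s in (0:ℝ)..2, (φ n s - φ₀ s) ^ 2) + ∫ s in Set.Ioc (0:ℝ) 2, φ₀ s ^ 2))
          + 24 * (∫ p in Set.Ioc (0:ℝ) 1 ×ˢ Set.Ioc (0:ℝ) 1, k₀ p.1 p.2 ^ 2)
            * ∫ s in (0:ℝ)..2, (φ n s - φ₀ s) ^ 2 := by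
      intro n
      have hDint : Integrable (fun x =>
          (((-2) * φ n (2 * x) - 2 * ∫ s in (0:ℝ)..x, k n x s * (φ n (s + x) - φ n (s - x)))
            - ((-2) * φ₀ (2 * x)
              - 2 * ∫ s in (0:ℝ)..x, k₀ x s * (φ₀ (s + x) - φ₀ (s - x)))) ^ 2)
          (volume.restrict (Set.Ioc (0:ℝ) 1)) := by
        refine Integrable.mono' (hbint n) (haesmD n) ?_
        filter_upwards [hbd n] with x hx
        rw [Real.norm_eq_abs, abs_of_nonneg (sq_nonneg _)]
        exact hx
      have h1 := MeasureTheory.integral_mono_ae hDint (hbint n) (hbd n)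
      have h2 : ∫ x in Set.Ioc (0:ℝ) 1, (12 * (φ n (2 * x) - φ₀ (2 * x)) ^ 2
          + 12 * (∫ s in (0:ℝ)..x, (k n x s - k₀ x s) * (φ n (s + x) - φ n (s - x))) ^ 2
          + 12 * (∫ s in (0:ℝ)..x, k₀ x s
              * ((φ n (s + x) - φ₀ (s + x)) - (φ n (s - x) - φ₀ (s - x)))) ^ 2)
          = 12 * (∫ x in Set.Ioc (0:ℝ) 1, (φ n (2 * x) - φ₀ (2 * x)) ^ 2)
            + 12 * (∫ x in Set.Ioc (0:ℝ) 1, (∫ s in (0:ℝ)..x,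
                (k n x s - k₀ x s) * (φ n (s + x) - φ n (s - x))) ^ 2)
            + 12 * ∫ x in Set.Ioc (0:ℝ) 1, (∫ s in (0:ℝ)..x, k₀ x s
                * ((φ n (s + x) - φ₀ (s + x)) - (φ n (s - x) - φ₀ (s - x)))) ^ 2 := by
        have ha : Integrable (fun x => 12 * (φ n (2 * x) - φ₀ (2 * x)) ^ 2
            + 12 * (∫ s in (0:ℝ)..x, (k n x s - k₀ x s) * (φ n (s + x) - φ n (s - x))) ^ 2)
            (volume.restrict (Set.Ioc (0:ℝ) 1)) :=
          ((hT1 n).const_mul 12).add ((hU n).1.const_mul 12)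
        rw [MeasureTheory.integral_add ha ((hV n).1.const_mul 12),
          MeasureTheory.integral_add ((hT1 n).const_mul 12) ((hU n).1.const_mul 12),
          MeasureTheory.integral_const_mul, MeasureTheory.integral_const_mul,
          MeasureTheory.integral_const_mul]
      have hUle := (hU n).2
      have hVle := (hV n).2
      have hT1e := hT1v n
      have hEe := hE n
      have hIφ := hIφn n
      have hml := mul_le_mul_of_nonneg_left hIφ
        (by positivity :
          (0:ℝ) ≤ 2 * ∫ p in Set.Ioc (0:ℝ) 1 ×ˢ Set.Ioc (0:ℝ) 1, (k n p.1 p.2 - k₀ p.1 p.2) ^ 2)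
      rw [h2] at h1
      rw [hT1e] at h1
      rw [← hEe] at hVle hIφ hml
      nlinarith [hKn0 n, hEn0 n, h1, hUle, hVle, hml]
    -- final squeeze
    have hnn : ∀ n, (0:ℝ) ≤ ∫ x in Set.Ioc (0:ℝ) 1,
        (((-2) * φ n (2 * x) - 2 * ∫ s in (0:ℝ)..x, k n x s * (φ n (s + x) - φ n (s - x)))
          - ((-2) * φ₀ (2 * x)
            - 2 * ∫ s in (0:ℝ)..x, k₀ x s * (φ₀ (s + x) - φ₀ (s - x)))) ^ 2 := fun n =>
      setIntegral_nonneg measurableSet_Ioc fun x _ => sq_nonneg _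
    have hW : Filter.Tendsto (fun n =>
        6 * (∫ s in (0:ℝ)..2, (φ n s - φ₀ s) ^ 2)
          + 48 * ((∫ p in Set.Ioc (0:ℝ) 1 ×ˢ Set.Ioc (0:ℝ) 1, (k n p.1 p.2 - k₀ p.1 p.2) ^ 2)
              * ((∫ s in (0:ℝ)..2, (φ n s - φ₀ s) ^ 2) + ∫ s in Set.Ioc (0:ℝ) 2, φ₀ s ^ 2))
          + 24 * (∫ p in Set.Ioc (0:ℝ) 1 ×ˢ Set.Ioc (0:ℝ) 1, k₀ p.1 p.2 ^ 2)
            * ∫ s in (0:ℝ)..2, (φ n s - φ₀ s) ^ 2) Filter.atTop (nhds 0) := by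
      have t1 := hφconv.const_mul (6:ℝ)
      have t2 := (hkconv.mul (hφconv.add (tendsto_const_nhds
        (x := ∫ s in Set.Ioc (0:ℝ) 2, φ₀ s ^ 2)))).const_mul (48:ℝ)
      have t3 := hφconv.const_mul
        (24 * ∫ p in Set.Ioc (0:ℝ) 1 ×ˢ Set.Ioc (0:ℝ) 1, k₀ p.1 p.2 ^ 2)
      have h4 := (t1.add t2).add t3
      simpa using h4
    have hgoal : (fun n => ∫ x in (0:ℝ)..1,
        (((-2) * φ n (2 * x) - 2 * ∫ s in (0:ℝ)..x, k n x s * (φ n (s + x) - φ n (s - x)))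
          - ((-2) * φ₀ (2 * x)
            - 2 * ∫ s in (0:ℝ)..x, k₀ x s * (φ₀ (s + x) - φ₀ (s - x)))) ^ 2)
        = fun n => ∫ x in Set.Ioc (0:ℝ) 1,
        (((-2) * φ n (2 * x) - 2 * ∫ s in (0:ℝ)..x, k n x s * (φ n (s + x) - φ n (s - x)))
          - ((-2) * φ₀ (2 * x)
            - 2 * ∫ s in (0:ℝ)..x, k₀ x s * (φ₀ (s + x) - φ₀ (s - x)))) ^ 2 :=
      funext fun n => intervalIntegral.integral_of_le zero_le_one
    rw [hgoal]
    exact squeeze_zero hnn hSle hW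
  · -- the norm bound
    rw [intervalIntegral.integral_of_le zero_le_one,
      show ∫ s in (0:ℝ)..2, φ₀ s ^ 2 = ∫ s in Set.Ioc (0:ℝ) 2, φ₀ s ^ 2 from
        intervalIntegral.integral_of_le (by norm_num)]
    calc Real.sqrt (∫ x in Set.Ioc (0:ℝ) 1,
          (∫ s in (0:ℝ)..x, k₀ x s * (φ₀ (s + x) - φ₀ (s - x))) ^ 2)
        ≤ Real.sqrt (2 * (∫ p in Set.Ioc (0:ℝ) 1 ×ˢ Set.Ioc (0:ℝ) 1, k₀ p.1 p.2 ^ 2)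
            * ∫ s in Set.Ioc (0:ℝ) 2, φ₀ s ^ 2) := Real.sqrt_le_sqrt h0le
      _ = Real.sqrt 2
            * Real.sqrt (∫ p in Set.Ioc (0:ℝ) 1 ×ˢ Set.Ioc (0:ℝ) 1, k₀ p.1 p.2 ^ 2)
            * Real.sqrt (∫ s in Set.Ioc (0:ℝ) 2, φ₀ s ^ 2) := by
          rw [Real.sqrt_mul (by positivity), Real.sqrt_mul (by norm_num : (0:ℝ) ≤ 2)]
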